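/- In ℚ_3 there exists t with t² = 61, and the elements z_1 = (359 − 39t)/722 and z_2 = (359 + 39t)/722 are roots of the equation z(1 − 19 + 19z)² = (1 − 6 + 6z)² (taking k = 2, α = 6, β = 19), and both satisfy |z_1 − 1|_3 ≤ 1/3 and |z_2 − 1|_3 ≤ 1/3, i.e. z_1, z_2 ∈ E_3. -/

import Mathlib

open Polynomial

lemma int_norm_one_of_not_dvd {k : ℤ} (h : ¬ (3:ℤ) ∣ k) : ‖((k:ℤ) : ℤ_[3])‖ = 1 := by
  refine le_antisymm (PadicInt.norm_le_one _) ?_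
  by_contra hlt
  push_neg at hlt
  exact h ((PadicInt.norm_int_lt_one_iff_dvd (p := 3) k).1 hlt)

lemma exists_sqrt61 : ∃ t : ℤ_[3], t ^ 2 = 61 ∧ ‖t - 1‖ ≤ 1/3 := by
  have hd : ((X ^ 2 - C 61 : ℤ_[3][X]).derivative.eval 1) = 2 := by
    simp; norm_num
  have h2 : ‖((X ^ 2 - C 61 : ℤ_[3][X]).derivative.eval 1)‖ = 1 := by
    rw [hd, show ((2:ℤ_[3]) = ((2:ℤ) : ℤ_[3])) by norm_num]
    exact int_norm_one_of_not_dvd (by decide)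
  have hev : ((X ^ 2 - C 61 : ℤ_[3][X]).eval 1) = -60 := by norm_num
  have h60 : ‖((X ^ 2 - C 61 : ℤ_[3][X]).eval 1)‖ = 1/3 := by
    rw [hev, show ((-60:ℤ_[3]) = 3 * ((-20:ℤ) : ℤ_[3])) by push_cast; ring, norm_mul,
      int_norm_one_of_not_dvd (by decide), show ((3:ℤ_[3]) = ((3:ℕ) : ℤ_[3])) by norm_num,
      PadicInt.norm_p]
    norm_num
  have hlt : ‖((X ^ 2 - C 61 : ℤ_[3][X]).eval 1)‖ <
      ‖((X ^ 2 - C 61 : ℤ_[3][X]).derivative.eval 1)‖ ^ 2 := by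
    rw [h60, h2]; norm_num
  obtain ⟨z, hz0, hz1, -, -⟩ := hensels_lemma hlt
  refine ⟨z, ?_, ?_⟩
  · have : z ^ 2 - 61 = 0 := by simpa using hz0
    exact sub_eq_zero.1 this
  · rw [coe_aeval_eq_eval, h2] at hz1
    obtain ⟨w, hw⟩ := (PadicInt.norm_lt_one_iff_dvd _).1 hz1
    rw [hw, norm_mul, PadicInt.norm_p]
    calc ((3:ℕ):ℝ)⁻¹ * ‖w‖ ≤ ((3:ℕ):ℝ)⁻¹ * 1 := by
          gcongr; exact PadicInt.norm_le_one w
      _ = 1/3 := by norm_num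

lemma aux_norm_le_one {t : ℚ_[3]} (ht : ‖t‖ ≤ 1) (a b : ℤ) :
    ‖(a : ℚ_[3]) + (b : ℚ_[3]) * t‖ ≤ 1 := by
  refine le_trans (Padic.nonarchimedean _ _) (max_le (Padic.norm_int_le_one a) ?_)
  calc ‖(b : ℚ_[3]) * t‖ = ‖(b : ℚ_[3])‖ * ‖t‖ := norm_mul _ _
    _ ≤ 1 * 1 := mul_le_mul (Padic.norm_int_le_one b) ht (norm_nonneg _) zero_le_one
    _ = 1 := one_mul 1

/-- Example 5.4 (`k = 2`, `p = 3`, `α = 6`, `β = 19`, `γ = 1`): there is `t ∈ ℚ_3` with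
`t² = 61`, and `z₁ = (359 − 39t)/722`, `z₂ = (359 + 39t)/722` are roots of
`z(1 − 19 + 19z)² = (1 − 6 + 6z)²`, both lying in `E_3 = {x : |x − 1|_3 ≤ 1/3}`. -/
theorem padic_example_k_two_alpha_six_beta_nineteen :
    ∃ t : ℚ_[3], t ^ 2 = 61 ∧
      ((359 - 39 * t) / 722) * (1 - 19 + 19 * ((359 - 39 * t) / 722)) ^ 2 =
        (1 - 6 + 6 * ((359 - 39 * t) / 722)) ^ 2 ∧
      ((359 + 39 * t) / 722) * (1 - 19 + 19 * ((359 + 39 * t) / 722)) ^ 2 =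
        (1 - 6 + 6 * ((359 + 39 * t) / 722)) ^ 2 ∧
      ‖(359 - 39 * t) / 722 - 1‖ ≤ 1 / 3 ∧
      ‖(359 + 39 * t) / 722 - 1‖ ≤ 1 / 3 := by
  obtain ⟨s, hs2, hs1⟩ := exists_sqrt61
  set t : ℚ_[3] := (s : ℚ_[3]) with ht_def
  have ht2 : t ^ 2 = 61 := by
    rw [ht_def, show ((s : ℚ_[3])) ^ 2 = ((s ^ 2 : ℤ_[3]) : ℚ_[3]) by push_cast; ring, hs2]
    norm_cast
  have htle : ‖t‖ ≤ 1 := by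
    rw [ht_def, PadicInt.padic_norm_e_of_padicInt]
    exact PadicInt.norm_le_one s
  have h722 : ‖(722 : ℚ_[3])‖ = 1 := by
    rw [show ((722:ℚ_[3]) = ((722:ℤ) : ℚ_[3])) by norm_num]
    refine le_antisymm (Padic.norm_int_le_one _) ?_
    by_contra hlt
    push_neg at hlt
    have := (Padic.norm_intCast_lt_one_iff (p := 3) (k := 722)).1 hlt
    norm_num at this
  have h3 : ‖(3 : ℚ_[3])‖ = 1/3 := by
    rw [show ((3:ℚ_[3]) = ((3:ℕ) : ℚ_[3])) by norm_num, Padic.norm_p]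
    norm_num
  have key : ∀ a b : ℤ, ‖(3 : ℚ_[3]) * ((a + b * t) / 722)‖ ≤ 1/3 := by
    intro a b
    rw [norm_mul, norm_div, h722, h3, div_one]
    calc 1/3 * ‖(a : ℚ_[3]) + (b : ℚ_[3]) * t‖ ≤ 1/3 * 1 := by
          gcongr; exact aux_norm_le_one htle a b
      _ = 1/3 := by norm_num
  refine ⟨t, ht2, ?_, ?_, ?_, ?_⟩
  · linear_combination ((-59319 * t - 552123) / 1042568) * ht2
  · linear_combination ((59319 * t - 552123) / 1042568) * ht2
  · have : (359 - 39 * t) / 722 - 1 = (3 : ℚ_[3]) * ((((-121:ℤ) : ℚ_[3]) + ((-13:ℤ):ℚ_[3]) * t) / 722) := by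
      push_cast; ring
    rw [this]; exact key (-121) (-13)
  · have : (359 + 39 * t) / 722 - 1 = (3 : ℚ_[3]) * ((((-121:ℤ) : ℚ_[3]) + ((13:ℤ):ℚ_[3]) * t) / 722) := by
      push_cast; ring
    rw [this]; exact key (-121) 13
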